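/- Let J be as given, and suppose that every edge of the coding graph E_J is non-negative and that E_J contains no non-positive cycles. Let α ∈ J_1 and let γ ∈ E^* with s(γ) = r(α) (so that αγ ∈ E^*). Then for every l ∈ ℕ there exist finitely many paths A_1, …, A_m in E_J, each with source vertex J_α, such that the L_J-label of each A_i has the form γω_i with |γω_i| ≥ l, and the collection {ω_1, …, ω_m} ⊆ E^* is a partition of r(γ). -/

import Mathlib

/-- A finite directed multigraph. -/
structure FinGraph where
  V : Type
  E : Type
  fintV : Fintype V
  fintE : Fintype E
  src : E → V
  rng : E → V

variable {G : FinGraph}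

/-- A finite path in the graph `G`: a source vertex together with a compatible
list of edges (a vertex is a path of length 0). -/
structure FPath (G : FinGraph) where
  source : G.V
  edges : List G.E
  head_src : ∀ e ∈ edges.head?, G.src e = source
  chain : edges.Chain' fun e f => G.rng e = G.src f

/-- The range (terminal vertex) of a finite path. -/
def FPath.range (p : FPath G) : G.V :=
  p.edges.getLast?.elim p.source G.rng

/-- The length-0 path at a vertex. -/
def FPath.nil (G : FinGraph) (v : G.V) : FPath G :=
  ⟨v, [], by simp, List.isChain_nil⟩

/-- `p.Prefix q` : the path `p` is an initial segment of the path `q`. -/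
def FPath.Prefix (p q : FPath G) : Prop :=
  p.source = q.source ∧ p.edges <+: q.edges

/-- The path obtained by removing the first edge (the tail `κ` of `ν = eκ`). -/
def FPath.tail (p : FPath G) : FPath G where
  source := p.edges.head?.elim p.source G.rng
  edges := p.edges.tail
  head_src := by
    cases hp : p.edges with
    | nil => simp
    | cons a l =>
      have h := p.chain
      rw [hp, List.Chain', List.isChain_cons] at h
      intro e he
      simp only [hp, List.head?_cons, Option.elim, List.tail_cons] at he ⊢
      exact (h.1 e he).symm
  chain := p.chain.tail

/-- An infinite path in the graph `G`. -/
structure IPath (G : FinGraph) where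
  edges : ℕ → G.E
  chain : ∀ i, G.rng (edges i) = G.src (edges (i + 1))

/-- The source vertex of an infinite path. -/
def IPath.source (p : IPath G) : G.V := G.src (p.edges 0)

/-- The cylinder set `Z(p)` of a finite path `p`: all infinite paths with prefix `p`. -/
def cylinder (p : FPath G) : Set (IPath G) :=
  {q | q.source = p.source ∧ ∀ i, (h : i < p.edges.length) → q.edges i = p.edges.get ⟨i, h⟩}

/-- A finite collection `S` of finite paths is a partition of the path `ν`:
the cylinder sets are pairwise disjoint with union `Z(ν)`. -/
def IsPartitionOfPath (S : Set (FPath G)) (ν : FPath G) : Prop :=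
  S.Finite ∧ (∀ p ∈ S, ∀ q ∈ S, p ≠ q → cylinder p ∩ cylinder q = ∅) ∧
    (⋃ p ∈ S, cylinder p) = cylinder ν

/-- A finite collection `S` of finite paths is a partition of the vertex `v`. -/
def IsPartitionOf (S : Set (FPath G)) (v : G.V) : Prop :=
  IsPartitionOfPath S (FPath.nil G v)

/-- Standing assumptions: no sinks, no sources, every cycle has an exit. -/
structure Standing (G : FinGraph) : Prop where
  no_sinks : ∀ v : G.V, ∃ e, G.src e = v
  no_sources : ∀ v : G.V, ∃ e, G.rng e = v
  cycles_exit : ∀ p : FPath G, p.edges ≠ [] → p.range = p.source →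
    ∃ e ∈ p.edges, ∃ f, f ≠ e ∧ G.src f = G.src e

/-- The combinatorial conditions making `u_J = Σ_{(μ,ν) ∈ J} S_μ S_ν^*` a unitary:
`J` is finite, `s(μ) = s(ν)`, `r(μ) = r(ν)`, `|ν| ≥ 1` for all `(μ,ν) ∈ J`, and both
families of cylinder sets are pairwise disjoint with union all of `E^∞`. -/
structure IsUnitaryJ (G : FinGraph) (J : Set (FPath G × FPath G)) : Prop where
  finite : J.Finite
  src_eq : ∀ p ∈ J, (Prod.fst p).source = (Prod.snd p).source
  rng_eq : ∀ p ∈ J, FPath.range (Prod.fst p) = FPath.range (Prod.snd p)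
  ne_nil : ∀ p ∈ J, (Prod.snd p).edges ≠ []
  disj₁ : ∀ p ∈ J, ∀ q ∈ J, p ≠ q → cylinder (Prod.fst p) ∩ cylinder (Prod.fst q) = ∅
  union₁ : (⋃ p ∈ J, cylinder (Prod.fst p)) = Set.univ
  disj₂ : ∀ p ∈ J, ∀ q ∈ J, p ≠ q → cylinder (Prod.snd p) ∩ cylinder (Prod.snd q) = ∅
  union₂ : (⋃ p ∈ J, cylinder (Prod.snd p)) = Set.univ

/-- Adjacency in the coding graph `E_J`: there is an edge from `p = (μ₁, e₁ν₁)` to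
`q = (μ₂, e₂ν₂)` iff the tail `ν₁` and `μ₂` are prefix-comparable
(the combinatorial content of `S_{ν₁}^* S_{μ₂} ≠ 0`). -/
def CGAdj (p q : FPath G × FPath G) : Prop :=
  FPath.Prefix p.2.tail q.1 ∨ FPath.Prefix q.1 p.2.tail

/-- The degree `|μ₂| − |ν₁|` of the coding-graph edge from `p` to `q`. -/
def cgDeg (p q : FPath G × FPath G) : ℤ :=
  (q.1.edges.length : ℤ) - (p.2.tail.edges.length : ℤ)

/-- `IsAppend p q r` : the path `r` is the concatenation `p q`. -/
def IsAppend (p q r : FPath G) : Prop :=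
  r.source = p.source ∧ q.source = p.range ∧ r.edges = p.edges ++ q.edges

/-- A finite path in the coding graph `E_J`, recorded by the (nonempty) list of
vertices of `J` it visits (a single vertex is a path of length 0). -/
structure CGPath (G : FinGraph) (J : Set (FPath G × FPath G)) where
  verts : List (FPath G × FPath G)
  ne : verts ≠ []
  mem : ∀ v ∈ verts, v ∈ J
  adj : verts.Chain' CGAdj

/-- The `E`-label of a path in the coding graph: the list of distinguished first
edges `e` of the second coordinates of the vertices it visits. -/
def CGPath.elabel {J : Set (FPath G × FPath G)} (ω : CGPath G J) : List G.E :=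
  ω.verts.filterMap fun v => v.2.edges.head?

/-- `IsLabelOf l γ` : `γ` is the `L_J`-label of the coding-graph path visiting the
vertices in the list `l` (all of whose edges are non-negative): the concatenation of
the `L_J`-labels of its edges, and the empty path at `r(μ)` for the length-0 path
at a vertex `(μ, eν)`. -/
inductive IsLabelOf : List (FPath G × FPath G) → FPath G → Prop
  | single (p : FPath G × FPath G) (γ : FPath G) :
      γ.edges = [] → γ.source = FPath.range p.1 → IsLabelOf [p] γ
  | cons (p q : FPath G × FPath G) (rest : List (FPath G × FPath G)) (α γ δ : FPath G) :
      IsAppend p.2.tail α q.1 → IsLabelOf (q :: rest) γ → IsAppend α γ δ →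
      IsLabelOf (p :: q :: rest) δ

/-- Every edge of the coding graph `E_J` is non-negative. -/
def AllEdgesNonneg (G : FinGraph) (J : Set (FPath G × FPath G)) : Prop :=
  ∀ p ∈ J, ∀ q ∈ J, CGAdj p q → 0 ≤ cgDeg p q

/-- The coding graph `E_J` contains a non-positive cycle. -/
def HasNonposCycle (G : FinGraph) (J : Set (FPath G × FPath G)) : Prop :=
  ∃ ω : CGPath G J, 2 ≤ ω.verts.length ∧ ω.verts.getLast ω.ne = ω.verts.head ω.ne ∧
    ω.verts.Chain' fun p q => cgDeg p q ≤ 0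

/-- All outgoing edges of the vertex `p` in the coding graph `E_J` are positive. -/
def AllOutPositive (G : FinGraph) (J : Set (FPath G × FPath G))
    (p : FPath G × FPath G) : Prop :=
  ∀ q ∈ J, CGAdj p q → 0 < cgDeg p q

/-- `IsSnoc p f q` : the path `q` is `p` extended by the single edge `f`. -/
def IsSnoc (p : FPath G) (f : G.E) (q : FPath G) : Prop :=
  q.source = p.source ∧ q.edges = p.edges ++ [f]

/-- `IsSplitting G J p J'` : `J'` is the splitting of `J` at the vertex `p = (μ, eν)`,
i.e. `J' = (J ∖ {(μ,eν)}) ∪ {(μf, eνf) : f ∈ E¹, s(f) = r(μ)}`. -/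
def IsSplitting (G : FinGraph) (J : Set (FPath G × FPath G)) (p : FPath G × FPath G)
    (J' : Set (FPath G × FPath G)) : Prop :=
  p ∈ J ∧ ∀ q, q ∈ J' ↔ (q ∈ J ∧ q ≠ p) ∨
    ∃ f, G.src f = FPath.range p.1 ∧ IsSnoc p.1 f q.1 ∧ IsSnoc p.2 f q.2

/-- The set of negative edges of the coding graph `E_J`. -/
def negEdgeSet (G : FinGraph) (J : Set (FPath G × FPath G)) :
    Set ((FPath G × FPath G) × (FPath G × FPath G)) :=
  {e | e.1 ∈ J ∧ e.2 ∈ J ∧ CGAdj e.1 e.2 ∧ cgDeg e.1 e.2 < 0}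

/-- `IsFinalNeg G J p q ω d` : the edge from `p` to `q` in `E_J` is a final negative
edge with destination `d`, via the zero path `ω` from `q` to `d`; the height of the
edge is `ω.verts.length - 1`. -/
def IsFinalNeg (G : FinGraph) (J : Set (FPath G × FPath G))
    (p q : FPath G × FPath G) (ω : CGPath G J) (d : FPath G × FPath G) : Prop :=
  p ∈ J ∧ q ∈ J ∧ CGAdj p q ∧ cgDeg p q < 0 ∧
    ω.verts.head ω.ne = q ∧ ω.verts.getLast ω.ne = d ∧
    (ω.verts.Chain' fun a b => cgDeg a b = 0) ∧ AllOutPositive G J d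

/-- `(E_J, E)` is left-synchronizing with delay `m` : any two paths of length `m`
(i.e. with `m+1` vertices) in `E_J` with the same `E`-label have the same source. -/
def LeftSyncDelay (G : FinGraph) (J : Set (FPath G × FPath G)) (m : ℕ) : Prop :=
  ∀ ω ξ : CGPath G J, ω.verts.length = m + 1 → ξ.verts.length = m + 1 →
    ω.elabel = ξ.elabel → ω.verts.head ω.ne = ξ.verts.head ξ.ne

/-- An infinite path in the coding graph `E_J`. -/
structure CGIPath (G : FinGraph) (J : Set (FPath G × FPath G)) where
  verts : ℕ → FPath G × FPath G
  mem : ∀ i, verts i ∈ J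
  adj : ∀ i, CGAdj (verts i) (verts (i + 1))

/-- The infinite `E`-label of an infinite coding-graph path is the infinite path `α`. -/
def ELabelInf {J : Set (FPath G × FPath G)} (ω : CGIPath G J) (α : IPath G) : Prop :=
  ∀ i, (ω.verts i).2.edges.head? = some (α.edges i)

/-- A transducer with input alphabet `A`, output alphabet `B`, a finite state set,
an initial state and a transition function. -/
structure Transducer (A B : Type) where
  S : Type
  finS : Finite S
  init : S
  tr : S → A → S × List B

/-- The state sequence of a transducer on an infinite input word. -/
def Transducer.states {A B : Type} (T : Transducer A B) (α : ℕ → A) : ℕ → T.S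
  | 0 => T.init
  | n + 1 => (T.tr (T.states α n) (α n)).1

/-- The `n`-th output block of a transducer on an infinite input word. -/
def Transducer.outBlock {A B : Type} (T : Transducer A B) (α : ℕ → A) (n : ℕ) : List B :=
  (T.tr (T.states α n) (α n)).2

/-- The concatenation of the first `n` blocks of a sequence of finite words. -/
def joinUpTo {X : Type} (f : ℕ → List X) (n : ℕ) : List X :=
  ((List.range n).map f).flatten

/-- Two infinite concatenations of sequences of finite words are equal. -/
def StreamsEq {X : Type} (f g : ℕ → List X) : Prop :=
  (∀ n, ∃ m, joinUpTo f n <+: joinUpTo g m) ∧ ∀ n, ∃ m, joinUpTo g n <+: joinUpTo f m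

/-- The type of edges of the coding graph `E_J`. -/
def CGEdgeT (G : FinGraph) (J : Set (FPath G × FPath G)) : Type :=
  {e : (FPath G × FPath G) × (FPath G × FPath G) // e.1 ∈ J ∧ e.2 ∈ J ∧ CGAdj e.1 e.2}

/-- The sequence of edges of an infinite coding-graph path. -/
def CGIPath.edgeSeq {J : Set (FPath G × FPath G)} (ω : CGIPath G J) (i : ℕ) : CGEdgeT G J :=
  ⟨(ω.verts i, ω.verts (i + 1)), ω.mem i, ω.mem (i + 1), ω.adj i⟩

theorem FPath.ext' {p q : FPath G} (hs : p.source = q.source)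
    (he : p.edges = q.edges) : p = q := by
  cases p; cases q; simp_all

lemma FPath.range_eq_of_getLast? {p : FPath G} {e} (h : p.edges.getLast? = some e) :
    p.range = G.rng e := by simp [FPath.range, h]

lemma FPath.range_eq_of_nil {p : FPath G} (h : p.edges = []) : p.range = p.source := by
  simp [FPath.range, h]

@[simp] lemma FPath.nil_edges (v : G.V) : (FPath.nil G v).edges = [] := rfl
@[simp] lemma FPath.nil_source (v : G.V) : (FPath.nil G v).source = v := rfl
@[simp] lemma FPath.nil_range (v : G.V) : (FPath.nil G v).range = v :=
  FPath.range_eq_of_nil rfl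

lemma FPath.head_src' {p : FPath G} {e : G.E} {l : List G.E} (h : p.edges = e :: l) :
    G.src e = p.source := p.head_src e (by rw [h]; rfl)

def FPath.append (p q : FPath G) (h : q.source = p.range) : FPath G where
  source := p.source
  edges := p.edges ++ q.edges
  head_src := by
    intro e he
    rcases hp : p.edges with _ | ⟨a, l⟩
    · rw [hp, List.nil_append] at he
      rw [q.head_src e he, h, FPath.range_eq_of_nil hp]
    · rw [hp, List.cons_append, List.head?_cons, Option.mem_some_iff] at he
      subst he
      exact FPath.head_src' hp
  chain := by
    rw [List.Chain', List.isChain_append]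
    refine ⟨p.chain, q.chain, ?_⟩
    intro x hx y hy
    rw [FPath.range_eq_of_getLast? hx] at h
    rw [q.head_src y hy]
    exact h.symm

@[simp] lemma FPath.append_source (p q : FPath G) (h) : (p.append q h).source = p.source := rfl
@[simp] lemma FPath.append_edges (p q : FPath G) (h) : (p.append q h).edges = p.edges ++ q.edges := rfl

lemma FPath.range_append (p q : FPath G) (h) : (p.append q h).range = q.range := by
  rcases hq : q.edges with _ | ⟨a, l⟩
  · rw [FPath.range_eq_of_nil (p := q) hq, h]
    unfold FPath.range
    simp [hq]
  · unfold FPath.range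
    rw [FPath.append_edges, List.getLast?_append_of_ne_nil _ (by simp [hq]), hq]
    rcases h2 : (a :: l).getLast? with _ | e
    · simp at h2
    · rfl

lemma isAppend_append (p q : FPath G) (h : q.source = p.range) : IsAppend p q (p.append q h) :=
  ⟨rfl, h, rfl⟩

lemma IsAppend.eq_append {p q r : FPath G} (h : IsAppend p q r) :
    r = p.append q h.2.1 := FPath.ext' h.1 h.2.2

lemma IsAppend.cancel {p q q' r : FPath G} (h : IsAppend p q r) (h' : IsAppend p q' r) : q = q' :=
  FPath.ext' (h.2.1.trans h'.2.1.symm) (List.append_cancel_left (h.2.2.symm.trans h'.2.2))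

lemma IsAppend.range_eq {p q r : FPath G} (h : IsAppend p q r) : r.range = q.range := by
  rw [h.eq_append]; exact FPath.range_append ..

def FPath.single (e : G.E) : FPath G := ⟨G.src e, [e], by simp, List.isChain_singleton e⟩

@[simp] lemma FPath.single_range (e : G.E) : (FPath.single e).range = G.rng e := rfl

lemma exists_split (r : FPath G) (n : ℕ) (hn : n ≤ r.edges.length) :
    ∃ p q : FPath G, IsAppend p q r ∧ p.edges.length = n := by
  induction n with
  | zero => exact ⟨FPath.nil G r.source, r, ⟨rfl, (FPath.nil_range _).symm, rfl⟩, rfl⟩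
  | succ n ih =>
    obtain ⟨p, q, hpq, hlen⟩ := ih (Nat.le_of_succ_le hn)
    have hr := hpq.2.2
    have hqlen : q.edges ≠ [] := by
      intro h0
      rw [h0, List.append_nil] at hr
      have : r.edges.length = n := by rw [hr, hlen]
      omega
    rcases hq : q.edges with _ | ⟨e, t⟩
    · exact absurd hq hqlen
    have hsrc : (FPath.single e).source = p.range := by
      show G.src e = p.range
      rw [FPath.head_src' hq, hpq.2.1]
    refine ⟨p.append (FPath.single e) hsrc, q.tail, ⟨?_, ?_, ?_⟩, ?_⟩
    · rw [hpq.1]; rfl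
    · rw [FPath.range_append]
      show q.edges.head?.elim q.source G.rng = _
      rw [hq]
      rfl
    · show r.edges = (p.edges ++ [e]) ++ q.edges.tail
      rw [hr, hq, List.append_assoc]
      rfl
    · show (p.edges ++ [e]).length = n + 1
      simp [hlen]

lemma FPath.Prefix.isAppend {a b : FPath G} (h : a.Prefix b) : ∃ q, IsAppend a q b := by
  obtain ⟨p, q, hpq, hlen⟩ := exists_split b a.edges.length h.2.length_le
  have hpa : p = a := by
    apply FPath.ext' (hpq.1.symm.trans h.1.symm)
    have h1 : p.edges = b.edges.take a.edges.length := by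
      rw [hpq.2.2, ← hlen, List.take_left]
    rw [h1, ← List.prefix_iff_eq_take.1 h.2]
  exact ⟨q, hpa ▸ hpq⟩

lemma FPath.tail_range {p : FPath G} (h : p.edges ≠ []) : p.tail.range = p.range := by
  rcases hp : p.edges with _ | ⟨e, t⟩
  · exact absurd hp h
  · have ht : p.tail.edges = t := by simp [FPath.tail, hp]
    rcases t with _ | ⟨f, t'⟩
    · rw [FPath.range_eq_of_nil ht, FPath.range_eq_of_getLast? (by rw [hp]; rfl)]
      show p.edges.head?.elim p.source G.rng = G.rng e
      rw [hp]
      rfl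
    · unfold FPath.range
      rw [ht, hp, List.getLast?_cons_cons]
      rcases h2 : (f :: t').getLast? with _ | g
      · simp at h2
      · rfl

lemma FPath.range_eq_get {p : FPath G} (h : p.edges ≠ []) :
    p.range = G.rng (p.edges.get ⟨p.edges.length - 1, Nat.sub_lt (List.length_pos_iff.2 h) one_pos⟩) := by
  apply FPath.range_eq_of_getLast?
  rw [List.getLast?_eq_getElem?]
  simp [List.getElem?_eq_getElem]

lemma IPath.ext' {x y : IPath G} (h : x.edges = y.edges) : x = y := by
  cases x; cases y; simp_all

def IPath.drop (x : IPath G) (n : ℕ) : IPath G :=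
  ⟨fun i => x.edges (n + i), fun i => x.chain (n + i)⟩

@[simp] lemma IPath.drop_edges (x : IPath G) (n i : ℕ) :
    (x.drop n).edges i = x.edges (n + i) := rfl

lemma source_drop {x : IPath G} {p : FPath G} (h : x ∈ cylinder p) :
    (x.drop p.edges.length).source = p.range := by
  by_cases hp : p.edges = []
  · show G.src (x.edges (p.edges.length + 0)) = p.range
    rw [FPath.range_eq_of_nil hp, ← h.1, hp]
    rfl
  · have hn1 : p.edges.length - 1 < p.edges.length := Nat.sub_lt (List.length_pos_iff.2 hp) one_pos
    show G.src (x.edges (p.edges.length + 0)) = p.range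
    have he : p.edges.length - 1 + 1 = p.edges.length + 0 := by
      have := List.length_pos_iff.2 hp
      omega
    rw [← he, ← x.chain (p.edges.length - 1), h.2 _ hn1, FPath.range_eq_get hp]

def apEdges (p : FPath G) (x : IPath G) : ℕ → G.E := fun i =>
  if hi : i < p.edges.length then p.edges.get ⟨i, hi⟩ else x.edges (i - p.edges.length)

lemma apEdges_lt {p : FPath G} {x : IPath G} {i : ℕ} (hlt : i < p.edges.length) :
    apEdges p x i = p.edges.get ⟨i, hlt⟩ := dif_pos hlt

lemma apEdges_ge {p : FPath G} {x : IPath G} {i : ℕ} (hge : p.edges.length ≤ i) :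
    apEdges p x i = x.edges (i - p.edges.length) := dif_neg (by omega)

lemma get_zero_mem_head? {α : Type*} {l : List α} (h : 0 < l.length) :
    l.get ⟨0, h⟩ ∈ l.head? := by
  cases l with
  | nil => simp at h
  | cons a t => rfl

def appendIPath (p : FPath G) (x : IPath G) (h : x.source = p.range) : IPath G where
  edges := apEdges p x
  chain := by
    intro i
    by_cases h1 : i + 1 < p.edges.length
    · have h0 : i < p.edges.length := by omega
      rw [apEdges_lt h0, apEdges_lt h1]
      exact List.isChain_iff_getElem.1 p.chain i (by omega)
    · by_cases h0 : i < p.edges.length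
      · rw [apEdges_lt h0, apEdges_ge (by omega)]
        have h2 : i + 1 - p.edges.length = 0 := by omega
        rw [h2]
        have hne : p.edges ≠ [] := by intro h'; rw [h'] at h0; simp at h0
        have hi' : i = p.edges.length - 1 := by omega
        subst hi'
        rw [← FPath.range_eq_get hne]
        exact h.symm
      · rw [apEdges_ge (by omega), apEdges_ge (by omega)]
        have h2 : i + 1 - p.edges.length = (i - p.edges.length) + 1 := by omega
        rw [h2]
        exact x.chain _

lemma appendIPath_edges_lt {p : FPath G} {x : IPath G} {h} {i : ℕ} (hlt : i < p.edges.length) :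
    (appendIPath p x h).edges i = p.edges.get ⟨i, hlt⟩ := apEdges_lt hlt

lemma appendIPath_edges_ge {p : FPath G} {x : IPath G} {h} {i : ℕ} (hge : p.edges.length ≤ i) :
    (appendIPath p x h).edges i = x.edges (i - p.edges.length) := apEdges_ge hge

lemma appendIPath_mem (p : FPath G) (x : IPath G) (h) : appendIPath p x h ∈ cylinder p := by
  refine ⟨?_, fun i hi => appendIPath_edges_lt hi⟩
  show G.src ((appendIPath p x h).edges 0) = p.source
  by_cases hp : p.edges = []
  · rw [appendIPath_edges_ge (by rw [hp]; simp)]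
    have h' := h
    rw [FPath.range_eq_of_nil hp] at h'
    rw [hp, ← h']
    rfl
  · have h0 : 0 < p.edges.length := List.length_pos_iff.2 hp
    rw [appendIPath_edges_lt h0]
    exact p.head_src _ (get_zero_mem_head? h0)

lemma drop_appendIPath (p : FPath G) (x : IPath G) (h) :
    (appendIPath p x h).drop p.edges.length = x := by
  apply IPath.ext'
  funext i
  show (appendIPath p x h).edges (p.edges.length + i) = x.edges i
  rw [appendIPath_edges_ge (by omega)]
  congr 1
  omega

lemma mem_cylinder_append {p q : FPath G} (h : q.source = p.range) {x : IPath G} :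
    x ∈ cylinder (p.append q h) ↔ x ∈ cylinder p ∧ x.drop p.edges.length ∈ cylinder q := by
  constructor
  · intro hx
    have hxp : x ∈ cylinder p := by
      refine ⟨hx.1, fun i hi => ?_⟩
      have h2 := hx.2 i (by simp only [FPath.append_edges, List.length_append]; omega)
      rw [h2]
      simp only [List.get_eq_getElem, FPath.append_edges]
      exact List.getElem_append_left hi
    refine ⟨hxp, ?_, fun i hi => ?_⟩
    · rw [source_drop hxp, h]
    · show x.edges (p.edges.length + i) = q.edges.get ⟨i, hi⟩
      have h2 := hx.2 (p.edges.length + i)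
        (by simp only [FPath.append_edges, List.length_append]; omega)
      rw [h2]
      simp only [List.get_eq_getElem, FPath.append_edges]
      rw [List.getElem_append_right (by omega)]
      congr 1
      omega
  · rintro ⟨hxp, hxq⟩
    refine ⟨hxp.1, fun i hi => ?_⟩
    simp only [FPath.append_edges, List.length_append] at hi
    simp only [List.get_eq_getElem, FPath.append_edges]
    by_cases hip : i < p.edges.length
    · rw [List.getElem_append_left hip]
      simpa using hxp.2 i hip
    · have h2 := hxq.2 (i - p.edges.length) (by omega)
      simp only [List.get_eq_getElem, IPath.drop_edges] at h2
      rw [List.getElem_append_right (by omega)]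
      rw [← h2]
      congr 1
      omega

lemma mem_cylinder_nil {x : IPath G} {v : G.V} :
    x ∈ cylinder (FPath.nil G v) ↔ x.source = v := by
  constructor
  · exact fun h => h.1
  · exact fun h => ⟨h, fun i hi => by simp at hi⟩

lemma cylinder_comparable_aux {a b : FPath G} {x : IPath G} (ha : x ∈ cylinder a)
    (hb : x ∈ cylinder b) (hle : a.edges.length ≤ b.edges.length) : a.Prefix b := by
  refine ⟨ha.1.symm.trans hb.1, ?_⟩
  have : a.edges = b.edges.take a.edges.length := by
    apply List.ext_getElem (by simp [Nat.min_eq_left hle])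
    intro i h1 h2
    have e1 := ha.2 i h1
    have e2 := hb.2 i (by omega)
    simp only [List.get_eq_getElem] at e1 e2
    rw [List.getElem_take]
    rw [← e1, ← e2]
  rw [this]
  exact List.take_prefix _ _

lemma cylinder_comparable {a b : FPath G} {x : IPath G} (ha : x ∈ cylinder a)
    (hb : x ∈ cylinder b) : a.Prefix b ∨ b.Prefix a := by
  rcases le_total a.edges.length b.edges.length with h | h
  · exact Or.inl (cylinder_comparable_aux ha hb h)
  · exact Or.inr (cylinder_comparable_aux hb ha h)

lemma exists_ipath (hG : Standing G) (v : G.V) : ∃ x : IPath G, x.source = v := by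
  choose f hf using hG.no_sinks
  refine ⟨⟨fun n => Nat.rec (f v) (fun _ e => f (G.rng e)) n, fun i => (hf _).symm⟩, ?_⟩
  show G.src (f v) = v
  exact hf v

section Labels

variable {J : Set (FPath G × FPath G)}

lemma tail_range_of_J (hJ : IsUnitaryJ G J) {v : FPath G × FPath G} (hv : v ∈ J) :
    v.2.tail.range = v.1.range := by
  rw [FPath.tail_range (hJ.ne_nil v hv), ← hJ.rng_eq v hv]

lemma IsLabelOf.source_eq (hJ : IsUnitaryJ G J) {L : List (FPath G × FPath G)} {lab : FPath G}
    (h : IsLabelOf L lab) {v} (hv : L.head? = some v) (hvJ : v ∈ J) :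
    lab.source = v.1.range := by
  cases h with
  | single p γ he hs =>
    have hpv : p = v := by simpa using hv
    rw [hs, hpv]
  | cons p q rest α γ δ h1 h2 h3 =>
    have hpv : p = v := by simpa using hv
    subst hpv
    rw [h3.1, h1.2.1, tail_range_of_J hJ hvJ]

lemma IsLabelOf.range_eq {L : List (FPath G × FPath G)} {lab : FPath G}
    (h : IsLabelOf L lab) {w} (hw : L.getLast? = some w) : lab.range = w.1.range := by
  induction h with
  | single p γ he hs =>
    have hpw : p = w := by simpa using hw
    rw [FPath.range_eq_of_nil he, hs, hpw]
  | cons p q rest α γ δ h1 h2 h3 ih =>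
    rw [h3.eq_append, FPath.range_append]
    exact ih (by rw [← hw, List.getLast?_cons_cons])

lemma IsLabelOf.unique {L : List (FPath G × FPath G)} {lab lab' : FPath G}
    (h : IsLabelOf L lab) (h' : IsLabelOf L lab') : lab = lab' := by
  induction h generalizing lab' with
  | single p γ he hs =>
    cases h' with
    | single _ γ' he' hs' => exact FPath.ext' (hs.trans hs'.symm) (he.trans he'.symm)
  | cons p q rest α γ δ h1 h2 h3 ih =>
    cases h' with
    | cons _ _ _ α' γ' δ' h1' h2' h3' =>
      obtain rfl : α = α' := h1.cancel h1'
      obtain rfl : γ = γ' := ih h2'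
      rw [h3.eq_append, h3'.eq_append]

lemma cgadj_prefix (hnn : AllEdgesNonneg G J) {p q : FPath G × FPath G}
    (hp : p ∈ J) (hq : q ∈ J) (hadj : CGAdj p q) : FPath.Prefix p.2.tail q.1 := by
  have hd := hnn p hp q hq hadj
  unfold cgDeg at hd
  have hle : p.2.tail.edges.length ≤ q.1.edges.length := by omega
  cases hadj with
  | inl h => exact h
  | inr h =>
    refine ⟨h.1.symm, ?_⟩
    rw [h.2.eq_of_length_le hle]

lemma isAppend_assoc {a b c ab abc : FPath G} (h1 : IsAppend a b ab) (h2 : IsAppend ab c abc) :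
    ∃ bc, IsAppend b c bc ∧ IsAppend a bc abc := by
  have hbc : c.source = b.range := by rw [h2.2.1, h1.range_eq]
  refine ⟨b.append c hbc, isAppend_append _ _ _, ?_, ?_, ?_⟩
  · rw [h2.1, h1.1]
  · show (b.append c hbc).source = a.range
    rw [FPath.append_source, h1.2.1]
  · rw [h2.2.2, h1.2.2, FPath.append_edges, List.append_assoc]

lemma label_exists (hJ : IsUnitaryJ G J) (hnn : AllEdgesNonneg G J) :
    ∀ L : List (FPath G × FPath G), L ≠ [] → (∀ u ∈ L, u ∈ J) → L.Chain' CGAdj →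
      ∃ lab, IsLabelOf L lab := by
  intro L
  induction L with
  | nil => simp
  | cons p L ih =>
    intro _ hmem hchain
    cases L with
    | nil => exact ⟨FPath.nil G p.1.range, IsLabelOf.single p _ rfl rfl⟩
    | cons q rest =>
      obtain ⟨γ, hγ⟩ := ih (by simp) (fun u hu => hmem u (List.mem_cons_of_mem _ hu))
        hchain.tail
      have hadj : CGAdj p q := (List.isChain_cons_cons.1 hchain).1
      obtain ⟨α, hα⟩ := (cgadj_prefix hnn (hmem p (by simp)) (hmem q (by simp)) hadj).isAppend
      have hγs : γ.source = α.range := by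
        rw [hγ.source_eq hJ rfl (hmem q (by simp)), hα.range_eq]
      exact ⟨α.append γ hγs, IsLabelOf.cons p q rest α γ _ hα hγ (isAppend_append _ _ _)⟩

lemma label_append {L₂ : List (FPath G × FPath G)} {w : FPath G × FPath G} {lab₂ : FPath G}
    (h2 : IsLabelOf (w :: L₂) lab₂) :
    ∀ {L₁ : List (FPath G × FPath G)} {lab₁ : FPath G},
      IsLabelOf (L₁ ++ [w]) lab₁ → ∀ (h : lab₂.source = lab₁.range),
      IsLabelOf (L₁ ++ w :: L₂) (lab₁.append lab₂ h) := by
  intro L₁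
  induction L₁ with
  | nil =>
    intro lab₁ h1 h
    cases h1 with
    | single p γ he hs =>
      have heq : lab₁.append lab₂ h = lab₂ := by
        apply FPath.ext'
        · exact (h.trans (FPath.range_eq_of_nil he)).symm
        · show lab₁.edges ++ lab₂.edges = lab₂.edges
          rw [he, List.nil_append]
      rw [List.nil_append, heq]
      exact h2
  | cons a L₁ ih =>
    intro lab₁ h1 h
    rw [List.cons_append] at h1
    generalize hM : L₁ ++ [w] = M at h1
    cases h1 with
    | single p γ he hs => simp at hM
    | cons p q rest α γ δ hα hγ hδ =>
      have h4 : IsAppend lab₁ lab₂ (lab₁.append lab₂ h) := isAppend_append _ _ _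
      obtain ⟨bc, hbc, habc⟩ := isAppend_assoc hδ h4
      have hihγ : IsLabelOf (L₁ ++ [w]) γ := by rw [hM]; exact hγ
      have hih : IsLabelOf (L₁ ++ w :: L₂) bc := by
        rw [hbc.eq_append]
        exact ih hihγ hbc.2.1
      show IsLabelOf (a :: (L₁ ++ w :: L₂)) (lab₁.append lab₂ h)
      cases L₁ with
      | nil =>
        rw [List.nil_append] at hM
        injection hM with hqw hrest
        subst hqw
        exact IsLabelOf.cons a w L₂ α bc _ hα hih habc
      | cons b L₁' =>
        rw [List.cons_append] at hM
        injection hM with hqb hrest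
        subst hqb
        exact IsLabelOf.cons a b _ α bc _ hα hih habc

lemma label_len_pos {L : List (FPath G × FPath G)} {lab : FPath G} (h : IsLabelOf L lab)
    {a b : FPath G × FPath G} (hin : [a, b] <:+: L) (hd : 0 < cgDeg a b) :
    0 < lab.edges.length := by
  induction h with
  | single p γ he hs =>
    have := hin.length_le
    simp at this
  | cons p q rest α γ δ h1 h2 h3 ih =>
    have hlen : δ.edges.length = α.edges.length + γ.edges.length := by
      rw [h3.2.2]; simp
    rcases List.infix_cons_iff.1 hin with hpre | hinf
    · obtain ⟨t, ht⟩ := hpre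
      injection ht with h5 h6
      injection h6 with h7 h8
      subst h5
      subst h7
      unfold cgDeg at hd
      have h10 : b.1.edges.length = a.2.tail.edges.length + α.edges.length := by
        rw [h1.2.2]; simp
      omega
    · have := ih hinf
      omega

lemma notChainNonpos {L : List (FPath G × FPath G)}
    (hL : ¬ L.Chain' (fun p q => cgDeg p q ≤ 0)) :
    ∃ a b, [a, b] <:+: L ∧ 0 < cgDeg a b := by
  induction L with
  | nil => exact absurd List.isChain_nil hL
  | cons a L ih =>
    cases L with
    | nil => exact absurd (List.isChain_singleton a) hL
    | cons b t =>
      by_cases hab : cgDeg a b ≤ 0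
      · have hnc : ¬ (b :: t).Chain' (fun p q => cgDeg p q ≤ 0) :=
          fun hc => hL (List.isChain_cons_cons.2 ⟨hab, hc⟩)
        obtain ⟨x, y, hinf, hd⟩ := ih hnc
        exact ⟨x, y, List.infix_cons hinf, hd⟩
      · exact ⟨a, b, ⟨[], t, rfl⟩, by omega⟩

lemma exists_pos_pair {J : Set (FPath G × FPath G)} (hJfin : J.Finite)
    (hnc : ¬ HasNonposCycle G J) {L : List (FPath G × FPath G)}
    (hmem : ∀ u ∈ L, u ∈ J) (hchain : L.Chain' CGAdj)
    (hlen : hJfin.toFinset.card + 1 ≤ L.length) :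
    ∃ a b, [a, b] <:+: L ∧ 0 < cgDeg a b := by
  have key : ∀ i j : Fin L.length, (i : ℕ) < j → L.get i = L.get j →
      ∃ a b, [a, b] <:+: L ∧ 0 < cgDeg a b := by
    intro i j hij he
    set M := (L.take ((j : ℕ) + 1)).drop (i : ℕ) with hM
    have hMinf : M <:+: L :=
      ((L.take ((j : ℕ) + 1)).drop_suffix (i : ℕ)).isInfix.trans
        (L.take_prefix ((j : ℕ) + 1)).isInfix
    have hMlen : M.length = (j : ℕ) + 1 - (i : ℕ) := by
      rw [hM, List.length_drop, List.length_take]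
      have := j.isLt
      omega
    have hMne : M ≠ [] := by
      intro h0
      rw [h0] at hMlen
      simp at hMlen
      omega
    have hget : ∀ (n : ℕ) (hn : n < M.length) (m : ℕ) (hm : m < L.length),
        (i : ℕ) + n = m → M[n] = L[m] := by
      intro n hn m hm hnm
      subst hnm
      simp only [hM, List.getElem_drop, List.getElem_take]
    have hhead : M.head hMne = L.get i := by
      rw [List.head_eq_getElem_zero hMne, List.get_eq_getElem]
      exact hget 0 (List.length_pos_iff.2 hMne) i i.isLt (by omega)
    have hlast : M.getLast hMne = L.get j := by
      rw [List.getLast_eq_getElem hMne, List.get_eq_getElem]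
      exact hget (M.length - 1) (by omega) j j.isLt (by omega)
    by_cases hch : M.Chain' (fun p q => cgDeg p q ≤ 0)
    · exfalso
      apply hnc
      refine ⟨⟨M, hMne, fun u hu => hmem u (hMinf.mem hu), hchain.infix hMinf⟩, ?_, ?_, hch⟩
      · show 2 ≤ M.length
        omega
      · show M.getLast hMne = M.head hMne
        rw [hhead, hlast, he]
    · obtain ⟨a, b, hinf, hd⟩ := notChainNonpos hch
      exact ⟨a, b, hinf.trans hMinf, hd⟩
  obtain ⟨i, _, j, _, hij, he⟩ := Finset.exists_ne_map_eq_of_card_lt_of_maps_to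
    (s := (Finset.univ : Finset (Fin L.length))) (t := hJfin.toFinset)
    (by simpa using by omega)
    (fun i _ => hJfin.mem_toFinset.2 (hmem _ (L.get_mem i)))
  rcases lt_or_gt_of_ne (fun h => hij (by exact_mod_cast Fin.ext h)) with h | h
  · exact key i j h he
  · exact key j i h he.symm

lemma label_len_lb (hJ : IsUnitaryJ G J) (hnn : AllEdgesNonneg G J)
    (hnc : ¬ HasNonposCycle G J) :
    ∀ (c : ℕ) (L : List (FPath G × FPath G)) (lab : FPath G),
      (∀ u ∈ L, u ∈ J) → L.Chain' CGAdj → IsLabelOf L lab →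
      c * hJ.finite.toFinset.card + 1 ≤ L.length → c ≤ lab.edges.length := by
  intro c
  induction c with
  | zero => intro L lab _ _ _ _; omega
  | succ c ih =>
    intro L lab hmem hchain hlab hlen
    set N := hJ.finite.toFinset.card with hN
    have hmul : (c + 1) * N = c * N + N := by ring
    have hNL : N + 1 ≤ L.length := by omega
    have hNlt : N < L.length := by omega
    set w := L[N] with hw
    have hL1 : L.take (N + 1) = L.take N ++ [w] := by
      rw [List.take_succ, hw, List.getElem?_eq_getElem hNlt]
      rfl
    have hL2 : L.drop N = w :: L.drop (N + 1) := List.drop_eq_getElem_cons hNlt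
    have hLeq : L.take N ++ w :: L.drop (N + 1) = L := by
      rw [← hL2, List.take_append_drop]
    -- labels for the two pieces
    obtain ⟨lab₁, hlab₁⟩ := label_exists hJ hnn (L.take (N + 1))
      (by rw [hL1]; simp)
      (fun u hu => hmem u (List.mem_of_mem_take hu))
      (hchain.take _)
    obtain ⟨lab₂, hlab₂⟩ := label_exists hJ hnn (L.drop N)
      (by rw [hL2]; simp)
      (fun u hu => hmem u (List.mem_of_mem_drop hu))
      (hchain.drop _)
    have hwJ : w ∈ J := hmem w (List.getElem_mem hNlt)
    have hh : lab₂.source = lab₁.range := by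
      rw [hL2] at hlab₂
      rw [hL1] at hlab₁
      rw [hlab₂.source_eq hJ rfl hwJ, hlab₁.range_eq (w := w) (by simp)]
    rw [hL1] at hlab₁
    rw [hL2] at hlab₂
    have hjoin := label_append hlab₂ hlab₁ hh
    rw [hLeq] at hjoin
    have heq : lab = lab₁.append lab₂ hh := hlab.unique hjoin
    have hlen₁ : 1 ≤ lab₁.edges.length := by
      obtain ⟨a, b, hinf, hd⟩ := exists_pos_pair hJ.finite hnc
        (L := L.take N ++ [w])
        (fun u hu => hmem u (by rw [← hL1] at hu; exact List.mem_of_mem_take hu))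
        (by rw [← hL1]; exact hchain.take _)
        (by rw [← hL1]; simp; omega)
      exact label_len_pos hlab₁ hinf hd
    have hlen₂ : c ≤ lab₂.edges.length := by
      apply ih (w :: L.drop (N + 1)) lab₂
        (fun u hu => hmem u (by rw [← hL2] at hu; exact List.mem_of_mem_drop hu))
        (by rw [← hL2]; exact hchain.drop _) hlab₂
      rw [← hL2]
      simp only [List.length_drop]
      omega
    rw [heq]
    simp only [FPath.append_edges, List.length_append]
    omega

def GoodFrom (J : Set (FPath G × FPath G)) (v : FPath G × FPath G)
    (L : List (FPath G × FPath G)) : Prop :=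
  (∀ u ∈ L, u ∈ J) ∧ L.Chain' CGAdj ∧ L.head? = some v

def Labels (J : Set (FPath G × FPath G)) (k : ℕ) (v : FPath G × FPath G) : Set (FPath G) :=
  {lab | ∃ L, GoodFrom J v L ∧ L.length = k + 1 ∧ IsLabelOf L lab}

lemma labels_source (hJ : IsUnitaryJ G J) {k : ℕ} {v : FPath G × FPath G} (hv : v ∈ J)
    {lab : FPath G} (hlab : lab ∈ Labels J k v) : lab.source = v.1.range := by
  obtain ⟨L, hg, _, hl⟩ := hlab
  exact hl.source_eq hJ hg.2.2 hv

lemma labels_partition (hJ : IsUnitaryJ G J) (hnn : AllEdgesNonneg G J) :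
    ∀ (k : ℕ) (v : FPath G × FPath G), v ∈ J →
      (∀ x : IPath G, x.source = v.1.range → ∃ lab ∈ Labels J k v, x ∈ cylinder lab) ∧
      (∀ lab₁ ∈ Labels J k v, ∀ lab₂ ∈ Labels J k v,
        (cylinder lab₁ ∩ cylinder lab₂).Nonempty → lab₁ = lab₂) := by
  intro k
  induction k with
  | zero =>
    intro v hv
    constructor
    · intro x hx
      refine ⟨FPath.nil G v.1.range,
        ⟨[v], ⟨by simp [hv], List.isChain_singleton v, rfl⟩, rfl, IsLabelOf.single v _ rfl rfl⟩, ?_⟩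
      exact mem_cylinder_nil.2 hx
    · rintro lab₁ ⟨L₁, hg₁, hl₁, hlab₁⟩ lab₂ ⟨L₂, hg₂, hl₂, hlab₂⟩ _
      obtain ⟨a₁, rfl⟩ := List.length_eq_one_iff.1 hl₁
      obtain ⟨a₂, rfl⟩ := List.length_eq_one_iff.1 hl₂
      obtain rfl : v = a₁ := by simpa using Eq.symm hg₁.2.2
      obtain rfl : v = a₂ := by simpa using Eq.symm hg₂.2.2
      exact hlab₁.unique hlab₂
  | succ k ih =>
    intro v hv
    have hκr : v.2.tail.range = v.1.range := tail_range_of_J hJ hv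
    constructor
    · intro x hx
      have hxs : x.source = v.2.tail.range := by rw [hκr]; exact hx
      have hy : appendIPath v.2.tail x hxs ∈ ⋃ q ∈ J, cylinder (Prod.fst q) := by
        rw [hJ.union₁]; trivial
      obtain ⟨q, hqJ, hyq⟩ := Set.mem_iUnion₂.1 hy
      have hyκ := appendIPath_mem v.2.tail x hxs
      have hadj : CGAdj v q := cylinder_comparable hyκ hyq
      obtain ⟨α, hα⟩ := (cgadj_prefix hnn hv hqJ hadj).isAppend
      have hxα : x ∈ cylinder α := by
        have h1 := (mem_cylinder_append hα.2.1).1 (by rw [← hα.eq_append]; exact hyq)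
        rw [drop_appendIPath] at h1
        exact h1.2
      have hx' : (x.drop α.edges.length).source = q.1.range := by
        rw [source_drop hxα, hα.range_eq]
      obtain ⟨δ, hδmem, hxδ⟩ := (ih q hqJ).1 (x.drop α.edges.length) hx'
      obtain ⟨L', hg', hl', hlab'⟩ := hδmem
      have hδs : δ.source = α.range := by
        rw [hlab'.source_eq hJ hg'.2.2 hqJ, ← hα.range_eq]
      rcases L' with _ | ⟨q₀, rest⟩
      · simp at hl'
      obtain rfl : q = q₀ := by simpa using Eq.symm hg'.2.2
      refine ⟨α.append δ hδs,
        ⟨v :: q :: rest,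
          ⟨fun u hu => by
              rcases List.mem_cons.1 hu with h | h
              · exact h ▸ hv
              · exact hg'.1 u h,
            List.isChain_cons_cons.2 ⟨hadj, hg'.2.1⟩, rfl⟩,
          by simpa using hl',
          IsLabelOf.cons v q rest α δ _ hα hlab' (isAppend_append _ _ _)⟩, ?_⟩
      exact (mem_cylinder_append hδs).2 ⟨hxα, hxδ⟩
    · rintro lab₁ ⟨L₁, hg₁, hl₁, hlab₁⟩ lab₂ ⟨L₂, hg₂, hl₂, hlab₂⟩ ⟨x, hx₁, hx₂⟩
      rcases L₁ with _ | ⟨v₁, M₁⟩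
      · simp at hl₁
      obtain rfl : v = v₁ := by simpa using Eq.symm hg₁.2.2
      rcases M₁ with _ | ⟨q₁, rest₁⟩
      · simp at hl₁
      rcases L₂ with _ | ⟨v₂, M₂⟩
      · simp at hl₂
      obtain rfl : v = v₂ := by simpa using Eq.symm hg₂.2.2
      rcases M₂ with _ | ⟨q₂, rest₂⟩
      · simp at hl₂
      cases hlab₁ with
      | cons _ _ _ α₁ γ₁ δ₁ hα₁ hγ₁ h3₁ =>
      cases hlab₂ with
      | cons _ _ _ α₂ γ₂ δ₂ hα₂ hγ₂ h3₂ =>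
      have hq₁J : q₁ ∈ J := hg₁.1 q₁ (by simp)
      have hq₂J : q₂ ∈ J := hg₂.1 q₂ (by simp)
      have hxα₁ : x ∈ cylinder α₁ ∧ x.drop α₁.edges.length ∈ cylinder γ₁ :=
        (mem_cylinder_append h3₁.2.1).1 (by rw [← h3₁.eq_append]; exact hx₁)
      have hxα₂ : x ∈ cylinder α₂ ∧ x.drop α₂.edges.length ∈ cylinder γ₂ :=
        (mem_cylinder_append h3₂.2.1).1 (by rw [← h3₂.eq_append]; exact hx₂)
      have hxs : x.source = v.2.tail.range := by
        rw [hxα₁.1.1, hα₁.2.1]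
      have hyq₁ : appendIPath v.2.tail x hxs ∈ cylinder q₁.1 := by
        rw [hα₁.eq_append]
        exact (mem_cylinder_append hα₁.2.1).2
          ⟨appendIPath_mem _ _ _, by rw [drop_appendIPath]; exact hxα₁.1⟩
      have hyq₂ : appendIPath v.2.tail x hxs ∈ cylinder q₂.1 := by
        rw [hα₂.eq_append]
        exact (mem_cylinder_append hα₂.2.1).2
          ⟨appendIPath_mem _ _ _, by rw [drop_appendIPath]; exact hxα₂.1⟩
      obtain rfl : q₁ = q₂ := by
        by_contra hne
        have := hJ.disj₁ q₁ hq₁J q₂ hq₂J hne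
        rw [Set.eq_empty_iff_forall_notMem] at this
        exact this _ ⟨hyq₁, hyq₂⟩
      obtain rfl : α₁ = α₂ := hα₁.cancel hα₂
      obtain rfl : γ₁ = γ₂ := by
        refine (ih q₁ hq₁J).2 γ₁ ⟨q₁ :: rest₁, ⟨fun u hu => hg₁.1 u (by simp [hu]),
          hg₁.2.1.tail, rfl⟩, by simpa using hl₁, hγ₁⟩ γ₂
          ⟨q₁ :: rest₂, ⟨fun u hu => hg₂.1 u (by simp [hu]),
          hg₂.2.1.tail, rfl⟩, by simpa using hl₂, hγ₂⟩
          ⟨x.drop α₁.edges.length, hxα₁.2, hxα₂.2⟩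
      rw [h3₁.eq_append, h3₂.eq_append]

lemma labels_finite (hJ : IsUnitaryJ G J) (k : ℕ) (v : FPath G × FPath G) :
    (Labels J k v).Finite := by
  have hS : {L : List (FPath G × FPath G) | L.length = k + 1 ∧ ∀ u ∈ L, u ∈ J}.Finite := by
    have hpi : (Set.pi Set.univ fun _ : Fin (k + 1) => J).Finite :=
      Set.Finite.pi (fun _ => hJ.finite)
    apply Set.Finite.subset (hpi.image List.ofFn)
    rintro L ⟨hlen, hmem⟩
    refine ⟨fun i => L.get (Fin.cast hlen.symm i), fun i _ => hmem _ (L.get_mem _), ?_⟩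
    apply List.ext_getElem (by simp [hlen])
    intro i h1 h2
    rw [List.getElem_ofFn]
    simp
  have hfib : ∀ L : List (FPath G × FPath G), {lab : FPath G | IsLabelOf L lab}.Finite :=
    fun L => Set.Subsingleton.finite (fun a ha b hb => IsLabelOf.unique ha hb)
  apply Set.Finite.subset (hS.biUnion (fun L _ => hfib L))
  rintro lab ⟨L, hg, hlen, hl⟩
  exact Set.mem_biUnion ⟨hlen, hg.1⟩ hl

end Labels


/-- Corollary 3.7: assuming all edges of `E_J` are non-negative and
there is no non-positive cycle, for `(α, β) ∈ J` and `γ` with `s(γ) = r(α)`, for every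
`l` there are paths `A₁, …, A_m` in `E_J` with source `J_α` whose `L_J`-labels are of
the form `γωᵢ` with `|γωᵢ| ≥ l` and `{ωᵢ}` a partition of `r(γ)`. -/
theorem diag_partition (G : FinGraph) (hG : Standing G)
    (J : Set (FPath G × FPath G)) (hJ : IsUnitaryJ G J)
    (hnn : AllEdgesNonneg G J) (hnc : ¬ HasNonposCycle G J)
    (p : FPath G × FPath G) (hp : p ∈ J)
    (γ : FPath G) (hγ : γ.source = FPath.range p.1) (l : ℕ) :
    ∃ (m : ℕ) (A : Fin m → CGPath G J) (ωf : Fin m → FPath G),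
      (∀ i, (A i).verts.head (A i).ne = p) ∧
      (∀ i, ∃ lab : FPath G, IsLabelOf (A i).verts lab ∧ IsAppend γ (ωf i) lab ∧
        l ≤ lab.edges.length) ∧
      IsPartitionOf (Set.range ωf) (FPath.range γ) := by
  classical
  set N := hJ.finite.toFinset.card with hN
  set c := max l γ.edges.length with hc
  set k := c * N with hk
  have hlb : ∀ lab ∈ Labels J k p, c ≤ lab.edges.length := by
    rintro lab ⟨L, hg, hlen, hl⟩
    exact label_len_lb hJ hnn hnc c L lab hg.1 hg.2.1 hl (by rw [hlen])
  set T := {lab | lab ∈ Labels J k p ∧ FPath.Prefix γ lab} with hT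
  have hTfin : T.Finite := (labels_finite hJ k p).subset (fun _ h => h.1)
  set Tfs := hTfin.toFinset with hTfs
  set m := Tfs.card with hm
  set e := Tfs.equivFin with he
  have key : ∀ i : Fin m, ∃ (A : CGPath G J) (ω lab : FPath G),
      A.verts.head A.ne = p ∧ IsLabelOf A.verts lab ∧ IsAppend γ ω lab ∧
      l ≤ lab.edges.length ∧ lab = ((e.symm i : Tfs) : FPath G) := by
    intro i
    have hlabT : ((e.symm i : Tfs) : FPath G) ∈ T := hTfin.mem_toFinset.1 (e.symm i).2
    obtain ⟨L, hg, hlen, hl⟩ := hlabT.1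
    obtain ⟨ω, hω⟩ := hlabT.2.isAppend
    have hne : L ≠ [] := by intro h0; rw [h0] at hlen; simp at hlen
    refine ⟨⟨L, hne, hg.1, hg.2.1⟩, ω, _, ?_, hl, hω, ?_, rfl⟩
    · have h1 := hg.2.2
      rwa [List.head?_eq_head hne, Option.some_inj] at h1
    · exact le_trans (le_max_left _ _) (hlb _ hlabT.1)
  choose A ωf lab hhead hlab hωap hlen2 hlabeq using key
  have hlabT : ∀ i, lab i ∈ T := by
    intro i
    rw [hlabeq i]
    exact hTfin.mem_toFinset.1 (e.symm i).2
  have hcylmem : ∀ (i : Fin m) (x : IPath G), x ∈ cylinder (ωf i) →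
      ∃ hsx : x.source = γ.range, appendIPath γ x hsx ∈ cylinder (lab i) := by
    intro i x hx
    have hsx : x.source = γ.range := by rw [hx.1, (hωap i).2.1]
    refine ⟨hsx, ?_⟩
    rw [(hωap i).eq_append]
    exact (mem_cylinder_append _).2
      ⟨appendIPath_mem _ _ _, by rw [drop_appendIPath]; exact hx⟩
  refine ⟨m, A, ωf, hhead, fun i => ⟨lab i, hlab i, hωap i, hlen2 i⟩,
    Set.finite_range _, ?_, ?_⟩
  · rintro a ⟨i, rfl⟩ b ⟨j, rfl⟩ hne
    rw [Set.eq_empty_iff_forall_notMem]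
    rintro x ⟨hxa, hxb⟩
    obtain ⟨hsx, hmem₁⟩ := hcylmem i x hxa
    obtain ⟨hsx', hmem₂⟩ := hcylmem j x hxb
    have hll : lab i = lab j :=
      (labels_partition hJ hnn k p hp).2 (lab i) (hlabT i).1 (lab j) (hlabT j).1
        ⟨appendIPath γ x hsx, hmem₁, hmem₂⟩
    have hij : i = j := by
      apply e.symm.injective
      apply Subtype.coe_injective
      show ((e.symm i : Tfs) : FPath G) = ((e.symm j : Tfs) : FPath G)
      rw [← hlabeq i, ← hlabeq j, hll]
    exact hne (by rw [hij])
  · apply Set.Subset.antisymm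
    · intro x hx
      simp only [Set.mem_iUnion] at hx
      obtain ⟨a, ⟨i, rfl⟩, hxa⟩ := hx
      exact mem_cylinder_nil.2 (by rw [hxa.1, (hωap i).2.1])
    · intro x hx
      have hsx : x.source = γ.range := mem_cylinder_nil.1 hx
      have hγx : (appendIPath γ x hsx).source = p.1.range := by
        rw [(appendIPath_mem γ x hsx).1, hγ]
      obtain ⟨lab₀, hlab₀S, hγxlab₀⟩ := (labels_partition hJ hnn k p hp).1 _ hγx
      have hpre : FPath.Prefix γ lab₀ :=
        cylinder_comparable_aux (appendIPath_mem _ _ _) hγxlab₀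
          (le_trans (le_max_right _ _) (hlb lab₀ hlab₀S))
      have hT0 : lab₀ ∈ T := ⟨hlab₀S, hpre⟩
      set i := e ⟨lab₀, hTfin.mem_toFinset.2 hT0⟩ with hi
      have hli : lab i = lab₀ := by rw [hlabeq i, hi]; simp
      have hx' : x ∈ cylinder (ωf i) := by
        have h5 : appendIPath γ x hsx ∈ cylinder (lab i) := by rw [hli]; exact hγxlab₀
        rw [(hωap i).eq_append] at h5
        have h6 := (mem_cylinder_append _).1 h5
        rw [drop_appendIPath] at h6
        exact h6.2
      exact Set.mem_biUnion ⟨i, rfl⟩ hx'
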